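/- arXiv:1204.3794 — 2 statements merged into one kernel-verified Lean document; each statement's English description precedes it below -/
import Mathlib

section
/- Let K satisfy |K(x-u)| ≤ C₀/|x-u|ⁿ. Let Ω ⊂ ℝⁿ, 1 < p < ∞, 0 < t < s < 1, 1/p + 1/q = 1. For f : Ω → ℂ define g₂(x,y) = ∫_{Ω ∩ {|x-u| < 4|x-y|}} K(x-u)(f(u) - f(x)) du (absolutely convergent under the Besov hypothesis). Then ∫_Ω ∫_Ω |g₂(x,y)|^p / |x-y|^{n+sp} dx dy ≤ C ∫_Ω ∫_Ω |f(u) - f(x)|^p / |x-u|^{n+sp} du dx, with C depending only on n, p, s, t, C₀. -/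
open MeasureTheory Set Metric ENNReal

lemma ofReal_norm_eq_coe_nnnorm {E : Type*} [SeminormedAddGroup E] (a : E) :
    ENNReal.ofReal ‖a‖ = (‖a‖₊ : ℝ≥0∞) := ofReal_norm a

lemma shell_bound (n : ℕ) (hn : 1 ≤ n) (a : ℝ) {r₁ r₂ : ℝ} (h1 : 0 < r₁) (h12 : r₁ ≤ r₂) :
    ∫⁻ u in {u : EuclideanSpace ℝ (Fin n) | r₁ ≤ ‖u‖ ∧ ‖u‖ < r₂}, (‖u‖₊ : ℝ≥0∞) ^ a
      ≤ ENNReal.ofReal (max (r₁ ^ a) (r₂ ^ a) * r₂ ^ n) *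
        volume (ball (0 : EuclideanSpace ℝ (Fin n)) 1) := by
  haveI : Nonempty (Fin n) := Fin.pos_iff_nonempty.mp hn
  have h2 : (0:ℝ) ≤ r₂ := le_trans h1.le h12
  have hmono : ∀ u : EuclideanSpace ℝ (Fin n), u ∈ {u : EuclideanSpace ℝ (Fin n) | r₁ ≤ ‖u‖ ∧ ‖u‖ < r₂} →
      (‖u‖₊ : ℝ≥0∞) ^ a ≤ ENNReal.ofReal (max (r₁ ^ a) (r₂ ^ a)) := by
    rintro u ⟨hu1, hu2⟩
    have hupos : 0 < ‖u‖ := lt_of_lt_of_le h1 hu1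
    have he : (‖u‖₊ : ℝ≥0∞) ^ a = ENNReal.ofReal (‖u‖ ^ a) := by
      rw [← ofReal_norm_eq_coe_nnnorm, ENNReal.ofReal_rpow_of_pos hupos]
    rw [he]
    apply ENNReal.ofReal_le_ofReal
    rcases le_or_gt a 0 with ha | ha
    · exact le_max_of_le_left (Real.rpow_le_rpow_of_nonpos h1 hu1 ha)
    · exact le_max_of_le_right (Real.rpow_le_rpow (norm_nonneg u) hu2.le ha.le)
  calc ∫⁻ u in {u : EuclideanSpace ℝ (Fin n) | r₁ ≤ ‖u‖ ∧ ‖u‖ < r₂}, (‖u‖₊ : ℝ≥0∞) ^ a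
      ≤ ∫⁻ _ in {u : EuclideanSpace ℝ (Fin n) | r₁ ≤ ‖u‖ ∧ ‖u‖ < r₂},
          ENNReal.ofReal (max (r₁ ^ a) (r₂ ^ a)) := setLIntegral_mono measurable_const hmono
    _ = ENNReal.ofReal (max (r₁ ^ a) (r₂ ^ a)) *
          volume {u : EuclideanSpace ℝ (Fin n) | r₁ ≤ ‖u‖ ∧ ‖u‖ < r₂} := setLIntegral_const _ _
    _ ≤ ENNReal.ofReal (max (r₁ ^ a) (r₂ ^ a)) * volume (ball (0 : EuclideanSpace ℝ (Fin n)) r₂) := by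
        gcongr
        intro u hu
        simpa [mem_ball_zero_iff] using hu.2
    _ = ENNReal.ofReal (max (r₁ ^ a) (r₂ ^ a) * r₂ ^ n) *
          volume (ball (0 : EuclideanSpace ℝ (Fin n)) 1) := by
        rw [Measure.addHaar_ball volume 0 h2, finrank_euclideanSpace_fin,
          ENNReal.ofReal_mul (le_max_iff.mpr (Or.inl (Real.rpow_nonneg h1.le a))), mul_assoc]

lemma lintegral_shells (n : ℕ) (hn : 1 ≤ n) (a : ℝ) (ha : 0 < (n:ℝ) + a) (ha0 : a < 0)
    (R : ℝ) (hR : 0 < R) :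
    ∫⁻ u in ball (0 : EuclideanSpace ℝ (Fin n)) R, (‖u‖₊ : ℝ≥0∞) ^ a
      ≤ (volume (ball (0 : EuclideanSpace ℝ (Fin n)) 1) * ENNReal.ofReal ((2:ℝ) ^ (-a)) *
          (1 - ENNReal.ofReal ((2:ℝ) ^ (-((n:ℝ) + a))))⁻¹) * ENNReal.ofReal (R ^ ((n:ℝ) + a)) := by
  haveI : Nonempty (Fin n) := Fin.pos_iff_nonempty.mp hn
  set E := EuclideanSpace ℝ (Fin n)
  set v1 := volume (ball (0 : E) 1) with hv1def
  -- shells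
  set s : ℕ → Set E := fun k => {u : E | R * (2:ℝ) ^ (-(k:ℝ) - 1) ≤ ‖u‖ ∧ ‖u‖ < R * (2:ℝ) ^ (-(k:ℝ))}
    with hs
  -- covering
  have cover : ball (0 : E) R ⊆ {(0:E)} ∪ ⋃ k, s k := by
    intro u hu
    rcases eq_or_ne u 0 with rfl | hu0
    · exact Or.inl rfl
    have hc : 0 < ‖u‖ := norm_pos_iff.mpr hu0
    have hcR : ‖u‖ < R := mem_ball_zero_iff.mp hu
    have hex : ∃ m : ℕ, R * (2:ℝ) ^ (-(m:ℝ) - 1) ≤ ‖u‖ := by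
      obtain ⟨m, hm⟩ := exists_pow_lt_of_lt_one (div_pos hc hR) (by norm_num : (2⁻¹:ℝ) < 1)
      refine ⟨m, ?_⟩
      have heq : (2:ℝ) ^ (-(m:ℝ)) = (2⁻¹:ℝ) ^ m := by
        rw [Real.rpow_neg (by norm_num), Real.rpow_natCast, inv_pow]
      have h1 : ((2:ℝ) ^ (-(m:ℝ) - 1)) ≤ (2⁻¹:ℝ) ^ m :=
        le_trans (Real.rpow_le_rpow_of_exponent_le one_le_two (by linarith)) heq.le
      have h2 : R * (2:ℝ) ^ (-(m:ℝ) - 1) ≤ R * (2⁻¹:ℝ) ^ m :=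
        mul_le_mul_of_nonneg_left h1 hR.le
      refine le_trans h2 ?_
      rw [lt_div_iff₀ hR] at hm
      nlinarith [hm]
    set k := Nat.find hex with hk
    have hk1 : R * (2:ℝ) ^ (-(k:ℝ) - 1) ≤ ‖u‖ := Nat.find_spec hex
    have hk2 : ‖u‖ < R * (2:ℝ) ^ (-(k:ℝ)) := by
      rcases Nat.eq_zero_or_pos k with hk0 | hkpos
      · rw [hk0]
        simpa using hcR
      · obtain ⟨j, hj⟩ := Nat.exists_eq_succ_of_ne_zero hkpos.ne'
        have hmin := Nat.find_min hex (m := j) (by omega)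
        push_neg at hmin
        have : (-(k:ℝ)) = -(j:ℝ) - 1 := by rw [hj]; push_cast; ring
        rw [this]
        exact hmin
    exact Or.inr (mem_iUnion.mpr ⟨k, hk1, hk2⟩)
  have step1 : ∫⁻ u in ball (0 : E) R, (‖u‖₊ : ℝ≥0∞) ^ a
      ≤ ∑' k, ∫⁻ u in s k, (‖u‖₊ : ℝ≥0∞) ^ a := by
    calc ∫⁻ u in ball (0 : E) R, (‖u‖₊ : ℝ≥0∞) ^ a
        ≤ ∫⁻ u in {(0:E)} ∪ ⋃ k, s k, (‖u‖₊ : ℝ≥0∞) ^ a :=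
          lintegral_mono' (Measure.restrict_mono cover le_rfl) le_rfl
      _ ≤ (∫⁻ u in {(0:E)}, (‖u‖₊ : ℝ≥0∞) ^ a) + ∫⁻ u in ⋃ k, s k, (‖u‖₊ : ℝ≥0∞) ^ a :=
          le_trans (lintegral_mono' (Measure.restrict_union_le _ _) le_rfl)
            (le_of_eq (lintegral_add_measure _ _ _))
      _ = ∫⁻ u in ⋃ k, s k, (‖u‖₊ : ℝ≥0∞) ^ a := by
          have hz : ∫⁻ u in ({(0:E)} : Set E), (‖u‖₊ : ℝ≥0∞) ^ a = 0 := by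
            rw [Measure.restrict_eq_zero.mpr (measure_singleton (0:E))]
            exact lintegral_zero_measure _
          rw [hz, zero_add]
      _ ≤ ∑' k, ∫⁻ u in s k, (‖u‖₊ : ℝ≥0∞) ^ a := lintegral_iUnion_le _ _
  -- term bound
  have term : ∀ k : ℕ, ∫⁻ u in s k, (‖u‖₊ : ℝ≥0∞) ^ a
      ≤ (v1 * ENNReal.ofReal ((2:ℝ) ^ (-a)) * ENNReal.ofReal (R ^ ((n:ℝ) + a))) *
          (ENNReal.ofReal ((2:ℝ) ^ (-((n:ℝ) + a)))) ^ k := by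
    intro k
    have hr1 : (0:ℝ) < R * (2:ℝ) ^ (-(k:ℝ) - 1) :=
      mul_pos hR (Real.rpow_pos_of_pos two_pos _)
    have hr12 : R * (2:ℝ) ^ (-(k:ℝ) - 1) ≤ R * (2:ℝ) ^ (-(k:ℝ)) :=
      mul_le_mul_of_nonneg_left
        (Real.rpow_le_rpow_of_exponent_le one_le_two (by linarith)) hR.le
    refine le_trans (shell_bound n hn a hr1 hr12) ?_
    have hmax : max ((R * (2:ℝ) ^ (-(k:ℝ) - 1)) ^ a) ((R * (2:ℝ) ^ (-(k:ℝ))) ^ a)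
        = (R * (2:ℝ) ^ (-(k:ℝ) - 1)) ^ a :=
      max_eq_left (Real.rpow_le_rpow_of_nonpos hr1 hr12 ha0.le)
    rw [hmax]
    apply le_of_eq
    have e2 : ∀ x y : ℝ, ((2:ℝ)^x)^y = (2:ℝ)^(x*y) := fun x y =>
      (Real.rpow_mul (by norm_num) x y).symm
    have key : (R * (2:ℝ) ^ (-(k:ℝ) - 1)) ^ a * (R * (2:ℝ) ^ (-(k:ℝ))) ^ n
        = ((2:ℝ) ^ (-a) * R ^ ((n:ℝ) + a)) * ((2:ℝ) ^ (-((n:ℝ) + a))) ^ k := by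
      rw [← Real.rpow_natCast (R * (2:ℝ) ^ (-(k:ℝ))) n,
        ← Real.rpow_natCast ((2:ℝ) ^ (-((n:ℝ) + a))) k,
        Real.mul_rpow hR.le (Real.rpow_pos_of_pos two_pos _).le,
        Real.mul_rpow hR.le (Real.rpow_pos_of_pos two_pos _).le,
        e2, e2, e2]
      rw [show R ^ a * (2:ℝ) ^ ((-(k:ℝ) - 1) * a) * (R ^ ((n:ℕ):ℝ) * (2:ℝ) ^ (-(k:ℝ) * ((n:ℕ):ℝ)))
            = (R ^ a * R ^ ((n:ℕ):ℝ)) * ((2:ℝ) ^ ((-(k:ℝ) - 1) * a) * (2:ℝ) ^ (-(k:ℝ) * ((n:ℕ):ℝ)))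
          from by ring,
        show (2:ℝ) ^ (-a) * R ^ ((n:ℝ) + a) * (2:ℝ) ^ (-((n:ℝ) + a) * (k:ℝ))
            = (R ^ ((n:ℝ) + a)) * ((2:ℝ) ^ (-a) * (2:ℝ) ^ (-((n:ℝ) + a) * (k:ℝ))) from by ring,
        ← Real.rpow_add hR, ← Real.rpow_add two_pos, ← Real.rpow_add two_pos]
      congr 1
      · congr 1
        ring
      · congr 1
        ring
    calc ENNReal.ofReal ((R * (2:ℝ) ^ (-(k:ℝ) - 1)) ^ a * (R * (2:ℝ) ^ (-(k:ℝ))) ^ n) * v1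
        = ENNReal.ofReal (((2:ℝ) ^ (-a) * R ^ ((n:ℝ) + a)) * ((2:ℝ) ^ (-((n:ℝ) + a))) ^ k) * v1 := by
          rw [key]
      _ = (v1 * ENNReal.ofReal ((2:ℝ) ^ (-a)) * ENNReal.ofReal (R ^ ((n:ℝ) + a))) *
          (ENNReal.ofReal ((2:ℝ) ^ (-((n:ℝ) + a)))) ^ k := by
          rw [ENNReal.ofReal_mul (by positivity), ENNReal.ofReal_mul (by positivity),
            ENNReal.ofReal_pow (by positivity)]
          ring
  have hsum : ∑' k, ∫⁻ u in s k, (‖u‖₊ : ℝ≥0∞) ^ a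
      ≤ (v1 * ENNReal.ofReal ((2:ℝ) ^ (-a)) * ENNReal.ofReal (R ^ ((n:ℝ) + a))) *
          ∑' k : ℕ, (ENNReal.ofReal ((2:ℝ) ^ (-((n:ℝ) + a)))) ^ k := by
    rw [← ENNReal.tsum_mul_left]
    exact ENNReal.tsum_le_tsum term
  refine le_trans step1 (le_trans hsum (le_of_eq ?_))
  rw [ENNReal.tsum_geometric]
  ring

lemma lintegral_ball_rpow (n : ℕ) (hn : 1 ≤ n) (a : ℝ) (ha : -(n:ℝ) < a) :
    ∃ c : ℝ≥0∞, c ≠ ⊤ ∧ ∀ R : ℝ, 0 < R →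
      ∫⁻ u in ball (0 : EuclideanSpace ℝ (Fin n)) R, (‖u‖₊ : ℝ≥0∞) ^ a
        ≤ c * ENNReal.ofReal (R ^ ((n:ℝ) + a)) := by
  haveI : Nonempty (Fin n) := Fin.pos_iff_nonempty.mp hn
  set E := EuclideanSpace ℝ (Fin n)
  set v1 := volume (ball (0 : E) 1) with hv1def
  have hv1 : v1 ≠ ⊤ := measure_ball_lt_top.ne
  have hna : 0 < (n:ℝ) + a := by linarith
  rcases lt_or_ge a 0 with ha0 | ha0
  · refine ⟨v1 * ENNReal.ofReal ((2:ℝ) ^ (-a)) *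
      (1 - ENNReal.ofReal ((2:ℝ) ^ (-((n:ℝ) + a))))⁻¹, ?_, fun R hR => lintegral_shells n hn a hna ha0 R hR⟩
    have hρ : ENNReal.ofReal ((2:ℝ) ^ (-((n:ℝ) + a))) < 1 :=
      ENNReal.ofReal_lt_one.mpr (Real.rpow_lt_one_of_one_lt_of_neg one_lt_two (by linarith))
    have h1ρ : (1 - ENNReal.ofReal ((2:ℝ) ^ (-((n:ℝ) + a)))) ≠ 0 := by
      simp only [ne_eq, tsub_eq_zero_iff_le, not_le]
      exact hρ
    exact ENNReal.mul_ne_top (ENNReal.mul_ne_top hv1 ENNReal.ofReal_ne_top)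
      (ENNReal.inv_ne_top.mpr h1ρ)
  · refine ⟨v1, hv1, fun R hR => ?_⟩
    have hb : ∀ u : E, u ∈ ball (0:E) R → (‖u‖₊ : ℝ≥0∞) ^ a ≤ ENNReal.ofReal (R ^ a) := by
      intro u hu
      rw [← ofReal_norm_eq_coe_nnnorm, ENNReal.ofReal_rpow_of_nonneg (norm_nonneg u) ha0]
      exact ENNReal.ofReal_le_ofReal
        (Real.rpow_le_rpow (norm_nonneg u) (mem_ball_zero_iff.mp hu).le ha0)
    calc ∫⁻ u in ball (0:E) R, (‖u‖₊ : ℝ≥0∞) ^ a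
        ≤ ∫⁻ _ in ball (0:E) R, ENNReal.ofReal (R ^ a) := setLIntegral_mono measurable_const hb
      _ = ENNReal.ofReal (R ^ a) * volume (ball (0:E) R) := setLIntegral_const _ _
      _ = v1 * ENNReal.ofReal (R ^ ((n:ℝ) + a)) := by
          rw [Measure.addHaar_ball volume 0 hR.le, finrank_euclideanSpace_fin,
            ← Real.rpow_natCast R n, ← mul_assoc,
            ← ENNReal.ofReal_mul (Real.rpow_nonneg hR.le a),
            ← Real.rpow_add hR, add_comm a (n:ℝ)]
          ring

lemma lintegral_compl_rpow (n : ℕ) (hn : 1 ≤ n) (b : ℝ) (hb : b < -(n:ℝ)) :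
    ∃ c : ℝ≥0∞, c ≠ ⊤ ∧ ∀ r : ℝ, 0 < r →
      ∫⁻ y in {y : EuclideanSpace ℝ (Fin n) | r ≤ ‖y‖}, (‖y‖₊ : ℝ≥0∞) ^ b
        ≤ c * ENNReal.ofReal (r ^ ((n:ℝ) + b)) := by
  haveI : Nonempty (Fin n) := Fin.pos_iff_nonempty.mp hn
  set E := EuclideanSpace ℝ (Fin n)
  set v1 := volume (ball (0 : E) 1) with hv1def
  have hv1 : v1 ≠ ⊤ := measure_ball_lt_top.ne
  have hnb : (n:ℝ) + b < 0 := by linarith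
  set ρ : ℝ≥0∞ := ENNReal.ofReal ((2:ℝ) ^ ((n:ℝ) + b)) with hρdef
  have hρ : ρ < 1 :=
    ENNReal.ofReal_lt_one.mpr (Real.rpow_lt_one_of_one_lt_of_neg one_lt_two hnb)
  have h1ρ : (1 - ρ) ≠ 0 := by
    simp only [ne_eq, tsub_eq_zero_iff_le, not_le]
    exact hρ
  refine ⟨v1 * ENNReal.ofReal ((2:ℝ) ^ (n:ℝ)) * (1 - ρ)⁻¹,
    ENNReal.mul_ne_top (ENNReal.mul_ne_top hv1 ENNReal.ofReal_ne_top)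
      (ENNReal.inv_ne_top.mpr h1ρ), fun r hr => ?_⟩
  set s : ℕ → Set E := fun k => {y : E | r * (2:ℝ) ^ (k:ℝ) ≤ ‖y‖ ∧ ‖y‖ < r * (2:ℝ) ^ ((k:ℝ) + 1)}
    with hs
  have cover : {y : E | r ≤ ‖y‖} ⊆ ⋃ k, s k := by
    intro y hy
    have hy' : r ≤ ‖y‖ := hy
    have hex : ∃ m : ℕ, ‖y‖ < r * (2:ℝ) ^ ((m:ℝ) + 1) := by
      obtain ⟨m, hm⟩ := pow_unbounded_of_one_lt (‖y‖ / r) (one_lt_two (α := ℝ))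
      refine ⟨m, ?_⟩
      rw [div_lt_iff₀ hr] at hm
      have h2 : ((2:ℝ) ^ m : ℝ) ≤ (2:ℝ) ^ ((m:ℝ) + 1) := by
        rw [← Real.rpow_natCast (2:ℝ) m]
        exact Real.rpow_le_rpow_of_exponent_le one_le_two (by linarith)
      nlinarith
    set k := Nat.find hex with hk
    have hk2 : ‖y‖ < r * (2:ℝ) ^ ((k:ℝ) + 1) := Nat.find_spec hex
    have hk1 : r * (2:ℝ) ^ (k:ℝ) ≤ ‖y‖ := by
      rcases Nat.eq_zero_or_pos k with hk0 | hkpos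
      · rw [hk0]
        simpa using hy'
      · obtain ⟨j, hj⟩ := Nat.exists_eq_succ_of_ne_zero hkpos.ne'
        have hmin := Nat.find_min hex (m := j) (by omega)
        push_neg at hmin
        have : ((k:ℝ)) = (j:ℝ) + 1 := by rw [hj]; push_cast; ring
        rw [this]
        exact hmin
    exact mem_iUnion.mpr ⟨k, hk1, hk2⟩
  have step1 : ∫⁻ y in {y : E | r ≤ ‖y‖}, (‖y‖₊ : ℝ≥0∞) ^ b
      ≤ ∑' k, ∫⁻ y in s k, (‖y‖₊ : ℝ≥0∞) ^ b :=
    le_trans (lintegral_mono' (Measure.restrict_mono cover le_rfl) le_rfl)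
      (lintegral_iUnion_le _ _)
  have term : ∀ k : ℕ, ∫⁻ y in s k, (‖y‖₊ : ℝ≥0∞) ^ b
      ≤ (v1 * ENNReal.ofReal ((2:ℝ) ^ (n:ℝ)) * ENNReal.ofReal (r ^ ((n:ℝ) + b))) * ρ ^ k := by
    intro k
    have hr1 : (0:ℝ) < r * (2:ℝ) ^ (k:ℝ) := mul_pos hr (Real.rpow_pos_of_pos two_pos _)
    have hr12 : r * (2:ℝ) ^ (k:ℝ) ≤ r * (2:ℝ) ^ ((k:ℝ) + 1) :=
      mul_le_mul_of_nonneg_left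
        (Real.rpow_le_rpow_of_exponent_le one_le_two (by linarith)) hr.le
    refine le_trans (shell_bound n hn b hr1 hr12) (le_of_eq ?_)
    have hmax : max ((r * (2:ℝ) ^ (k:ℝ)) ^ b) ((r * (2:ℝ) ^ ((k:ℝ) + 1)) ^ b)
        = (r * (2:ℝ) ^ (k:ℝ)) ^ b :=
      max_eq_left (Real.rpow_le_rpow_of_nonpos hr1 hr12 (by linarith : b ≤ 0))
    rw [hmax]
    have e2 : ∀ x y : ℝ, ((2:ℝ)^x)^y = (2:ℝ)^(x*y) := fun x y =>
      (Real.rpow_mul (by norm_num) x y).symm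
    have key : (r * (2:ℝ) ^ (k:ℝ)) ^ b * (r * (2:ℝ) ^ ((k:ℝ) + 1)) ^ n
        = ((2:ℝ) ^ (n:ℝ) * r ^ ((n:ℝ) + b)) * ((2:ℝ) ^ ((n:ℝ) + b)) ^ k := by
      rw [← Real.rpow_natCast (r * (2:ℝ) ^ ((k:ℝ) + 1)) n,
        ← Real.rpow_natCast ((2:ℝ) ^ ((n:ℝ) + b)) k,
        Real.mul_rpow hr.le (Real.rpow_pos_of_pos two_pos _).le,
        Real.mul_rpow hr.le (Real.rpow_pos_of_pos two_pos _).le,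
        e2, e2, e2]
      rw [show r ^ b * (2:ℝ) ^ ((k:ℝ) * b) * (r ^ ((n:ℕ):ℝ) * (2:ℝ) ^ (((k:ℝ) + 1) * ((n:ℕ):ℝ)))
            = (r ^ b * r ^ ((n:ℕ):ℝ)) * ((2:ℝ) ^ ((k:ℝ) * b) * (2:ℝ) ^ (((k:ℝ) + 1) * ((n:ℕ):ℝ)))
          from by ring,
        show (2:ℝ) ^ ((n:ℝ)) * r ^ ((n:ℝ) + b) * (2:ℝ) ^ (((n:ℝ) + b) * (k:ℝ))
            = (r ^ ((n:ℝ) + b)) * ((2:ℝ) ^ ((n:ℝ)) * (2:ℝ) ^ (((n:ℝ) + b) * (k:ℝ))) from by ring,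
        ← Real.rpow_add hr, ← Real.rpow_add two_pos, ← Real.rpow_add two_pos]
      congr 1
      · congr 1
        ring
      · congr 1
        ring
    calc ENNReal.ofReal ((r * (2:ℝ) ^ (k:ℝ)) ^ b * (r * (2:ℝ) ^ ((k:ℝ) + 1)) ^ n) * v1
        = ENNReal.ofReal (((2:ℝ) ^ (n:ℝ) * r ^ ((n:ℝ) + b)) * ((2:ℝ) ^ ((n:ℝ) + b)) ^ k) * v1 := by
          rw [key]
      _ = (v1 * ENNReal.ofReal ((2:ℝ) ^ (n:ℝ)) * ENNReal.ofReal (r ^ ((n:ℝ) + b))) * ρ ^ k := by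
          rw [ENNReal.ofReal_mul (by positivity), ENNReal.ofReal_mul (by positivity),
            ENNReal.ofReal_pow (by positivity)]
          ring
  have hsum : ∑' k, ∫⁻ y in s k, (‖y‖₊ : ℝ≥0∞) ^ b
      ≤ (v1 * ENNReal.ofReal ((2:ℝ) ^ (n:ℝ)) * ENNReal.ofReal (r ^ ((n:ℝ) + b))) * ∑' k : ℕ, ρ ^ k := by
    rw [← ENNReal.tsum_mul_left]
    exact ENNReal.tsum_le_tsum term
  refine le_trans step1 (le_trans hsum (le_of_eq ?_))
  rw [ENNReal.tsum_geometric]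
  ring

lemma ofReal_norm_integral_le {α : Type*} [MeasurableSpace α] (μ : Measure α) (h : α → ℂ) :
    ENNReal.ofReal ‖∫ a, h a ∂μ‖ ≤ ∫⁻ a, ENNReal.ofReal ‖h a‖ ∂μ := by
  rcases eq_or_ne (∫⁻ a, ENNReal.ofReal ‖h a‖ ∂μ) ⊤ with htop | hfin
  · rw [htop]; exact le_top
  · calc ENNReal.ofReal ‖∫ a, h a ∂μ‖
        ≤ ENNReal.ofReal ((∫⁻ a, ENNReal.ofReal ‖h a‖ ∂μ).toReal) :=
          ENNReal.ofReal_le_ofReal (norm_integral_le_lintegral_norm h)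
      _ = _ := ENNReal.ofReal_toReal hfin

lemma key1 (n : ℕ) (hn : 1 ≤ n) (p q s t C₀ : ℝ)
    (hp : 1 < p) (ht : 0 < t) (hts : t < s) (hq1 : 1 < q)
    (hpq : 1 / p + 1 / q = 1) (hC₀ : 0 < C₀) (cA : ℝ≥0∞)
    (hcA : ∀ R : ℝ, 0 < R →
      ∫⁻ u in ball (0 : EuclideanSpace ℝ (Fin n)) R, (‖u‖₊ : ℝ≥0∞) ^ (t*q - (n:ℝ))
        ≤ cA * ENNReal.ofReal (R ^ ((n:ℝ) + (t*q - (n:ℝ)))))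
    (Ω : Set (EuclideanSpace ℝ (Fin n))) (K : EuclideanSpace ℝ (Fin n) → ℝ)
    (f : EuclideanSpace ℝ (Fin n) → ℂ)
    (hΩ : MeasurableSet Ω) (hKm : Measurable K) (hfm : Measurable f)
    (hKb : ∀ x : EuclideanSpace ℝ (Fin n), x ≠ 0 → |K x| ≤ C₀ / ‖x‖ ^ (n : ℝ))
    (x y : EuclideanSpace ℝ (Fin n)) (hxy : y ≠ x) :
    ENNReal.ofReal
        (‖∫ u in Ω ∩ {u | ‖x - u‖ < 4 * ‖x - y‖}, ((K (x - u) : ℝ) : ℂ) * (f u - f x)‖ ^ p /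
          ‖x - y‖ ^ ((n : ℝ) + s * p))
      ≤ ((ENNReal.ofReal C₀)^p * cA^(p/q) * (ENNReal.ofReal (4:ℝ))^(t*p)) *
          ((‖x - y‖₊ : ℝ≥0∞) ^ ((t-s)*p - (n:ℝ))) *
          ∫⁻ u in Ω ∩ {u | ‖x - u‖ < 4 * ‖x - y‖},
            (‖f u - f x‖₊ : ℝ≥0∞)^p * (‖x - u‖₊ : ℝ≥0∞)^(-((n:ℝ) + t*p)) := by
  have hp0 : 0 < p := lt_trans one_pos hp
  have hq0 : 0 < q := lt_trans one_pos hq1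
  have hconj : Real.HolderConjugate p q := Real.holderConjugate_iff.mpr ⟨hp, by rw [← one_div, ← one_div]; exact hpq⟩
  have hR : 0 < ‖x - y‖ := norm_pos_iff.mpr (sub_ne_zero.mpr (fun h => hxy h.symm))
  have hRne : (‖x - y‖₊ : ℝ≥0∞) ≠ 0 := by
    simpa [ENNReal.coe_ne_zero, nnnorm_eq_zero] using (sub_ne_zero.mpr (fun h => hxy h.symm))
  set A : Set (EuclideanSpace ℝ (Fin n)) := Ω ∩ {u | ‖x - u‖ < 4 * ‖x - y‖} with hAdef
  set g₂ : ℂ := ∫ u in A, ((K (x - u) : ℝ) : ℂ) * (f u - f x) with hg₂def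
  set φ : EuclideanSpace ℝ (Fin n) → ℝ≥0∞ :=
    fun u => (‖f u - f x‖₊ : ℝ≥0∞) * (‖x - u‖₊ : ℝ≥0∞)^(-((n:ℝ)+t*p)/p) with hφdef
  set ψ : EuclideanSpace ℝ (Fin n) → ℝ≥0∞ :=
    fun u => (‖x - u‖₊ : ℝ≥0∞)^(((n:ℝ)+t*p)/p - (n:ℝ)) with hψdef
  set Jt : ℝ≥0∞ :=
    ∫⁻ u in A, (‖f u - f x‖₊ : ℝ≥0∞)^p * (‖x - u‖₊ : ℝ≥0∞)^(-((n:ℝ) + t*p)) with hJtdef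
  -- Step (1): split off the denominator
  have e0 : ENNReal.ofReal (‖g₂‖ ^ p / ‖x - y‖ ^ ((n : ℝ) + s * p))
      = (ENNReal.ofReal ‖g₂‖)^p * ((‖x - y‖₊ : ℝ≥0∞) ^ ((n:ℝ) + s*p))⁻¹ := by
    rw [ENNReal.ofReal_div_of_pos (Real.rpow_pos_of_pos hR _), div_eq_mul_inv,
      ENNReal.ofReal_rpow_of_nonneg (norm_nonneg _) hp0.le,
      ← ENNReal.ofReal_rpow_of_pos hR, ofReal_norm_eq_coe_nnnorm]
  -- Step (2)+(3): pointwise bound on the kernel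
  have hpt : ∀ u, ENNReal.ofReal ‖((K (x - u) : ℝ) : ℂ) * (f u - f x)‖
      ≤ ENNReal.ofReal C₀ * (φ u * ψ u) := by
    intro u
    rcases eq_or_ne u x with rfl | hux
    · simp
    · have hxu : x - u ≠ 0 := sub_ne_zero.mpr hux.symm
      have hxu0 : 0 < ‖x - u‖ := norm_pos_iff.mpr hxu
      have hne : (‖x - u‖₊ : ℝ≥0∞) ≠ 0 := by
        simpa [ENNReal.coe_ne_zero, nnnorm_eq_zero] using hxu
      have hmul : φ u * ψ u = (‖f u - f x‖₊ : ℝ≥0∞) * (‖x - u‖₊ : ℝ≥0∞)^(-(n:ℝ)) := by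
        rw [hφdef, hψdef]
        simp only []
        rw [mul_assoc, ← ENNReal.rpow_add _ _ hne ENNReal.coe_ne_top,
          show -((n:ℝ)+t*p)/p + (((n:ℝ)+t*p)/p - (n:ℝ)) = -(n:ℝ) from by ring]
      rw [hmul]
      have h1 : ‖((K (x - u) : ℝ) : ℂ) * (f u - f x)‖ = |K (x - u)| * ‖f u - f x‖ := by
        rw [norm_mul, Complex.norm_real, Real.norm_eq_abs]
      calc ENNReal.ofReal ‖((K (x - u) : ℝ) : ℂ) * (f u - f x)‖
          = ENNReal.ofReal (|K (x - u)| * ‖f u - f x‖) := by rw [h1]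
        _ ≤ ENNReal.ofReal ((C₀ / ‖x - u‖ ^ (n:ℝ)) * ‖f u - f x‖) :=
            ENNReal.ofReal_le_ofReal
              (mul_le_mul_of_nonneg_right (hKb _ hxu) (norm_nonneg _))
        _ = ENNReal.ofReal C₀ * ((‖f u - f x‖₊ : ℝ≥0∞) * (‖x - u‖₊ : ℝ≥0∞)^(-(n:ℝ))) := by
            rw [div_mul_eq_mul_div, mul_div_assoc, ENNReal.ofReal_mul hC₀.le,
              ENNReal.ofReal_div_of_pos (Real.rpow_pos_of_pos hxu0 _),
              ofReal_norm_eq_coe_nnnorm,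
              ← ENNReal.ofReal_rpow_of_pos hxu0, ofReal_norm_eq_coe_nnnorm,
              ENNReal.rpow_neg, div_eq_mul_inv]
  -- Step: `ofReal ‖g₂‖ ≤ C₀ * ∫ φψ`
  have hI : ENNReal.ofReal ‖g₂‖ ≤ ENNReal.ofReal C₀ * ∫⁻ u in A, φ u * ψ u := by
    calc ENNReal.ofReal ‖g₂‖
        ≤ ∫⁻ u in A, ENNReal.ofReal ‖((K (x - u) : ℝ) : ℂ) * (f u - f x)‖ :=
          ofReal_norm_integral_le _ _
      _ ≤ ∫⁻ u in A, ENNReal.ofReal C₀ * (φ u * ψ u) := lintegral_mono hpt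
      _ = ENNReal.ofReal C₀ * ∫⁻ u in A, φ u * ψ u :=
          lintegral_const_mul' _ _ ENNReal.ofReal_ne_top
  -- Hölder
  have hφm : Measurable φ := by fun_prop
  have hψm : Measurable ψ := by fun_prop
  have hHolder : ∫⁻ u in A, φ u * ψ u ≤ (∫⁻ u in A, φ u ^ p) ^ (1/p) * (∫⁻ u in A, ψ u ^ q) ^ (1/q) := by
    simpa [Pi.mul_apply] using
      ENNReal.lintegral_mul_le_Lp_mul_Lq (volume.restrict A) hconj
        hφm.aemeasurable hψm.aemeasurable
  have hφp : ∫⁻ u in A, φ u ^ p = Jt := by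
    apply lintegral_congr
    intro u
    rw [hφdef]
    simp only []
    rw [ENNReal.mul_rpow_of_nonneg _ _ hp0.le, ← ENNReal.rpow_mul,
      show -((n:ℝ)+t*p)/p * p = -((n:ℝ)+t*p) from by field_simp]
  have hexpq : (((n:ℝ)+t*p)/p - (n:ℝ)) * q = t*q - (n:ℝ) := by
    have hp' : p ≠ 0 := hp0.ne'
    have hq' : q ≠ 0 := hq0.ne'
    have hpq' : q + p = p * q := by
      field_simp at hpq
      linarith [hpq]
    field_simp
    nlinarith [hpq']
  have hψq : ∫⁻ u in A, ψ u ^ q ≤ cA * ENNReal.ofReal ((4 * ‖x - y‖) ^ ((n:ℝ) + (t*q - (n:ℝ)))) := by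
    have hsub : A ⊆ (fun u => x - u) ⁻¹' (ball (0 : EuclideanSpace ℝ (Fin n)) (4 * ‖x - y‖)) := by
      intro u hu
      simpa [mem_ball_zero_iff] using hu.2
    calc ∫⁻ u in A, ψ u ^ q
        = ∫⁻ u in A, (‖x - u‖₊ : ℝ≥0∞)^(t*q - (n:ℝ)) := by
          apply lintegral_congr
          intro u
          rw [hψdef]
          simp only []
          rw [← ENNReal.rpow_mul, hexpq]
      _ ≤ ∫⁻ u in (fun u => x - u) ⁻¹' (ball (0 : EuclideanSpace ℝ (Fin n)) (4 * ‖x - y‖)),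
            (‖x - u‖₊ : ℝ≥0∞)^(t*q - (n:ℝ)) :=
          lintegral_mono' (Measure.restrict_mono hsub le_rfl) le_rfl
      _ = ∫⁻ w in ball (0 : EuclideanSpace ℝ (Fin n)) (4 * ‖x - y‖), (‖w‖₊ : ℝ≥0∞)^(t*q - (n:ℝ)) :=
          (Measure.measurePreserving_sub_left volume x).setLIntegral_comp_preimage_emb
            (MeasurableEquiv.subLeft x).measurableEmbedding
            (fun w => (‖w‖₊ : ℝ≥0∞)^(t*q - (n:ℝ))) (ball 0 (4 * ‖x - y‖))
      _ ≤ cA * ENNReal.ofReal ((4 * ‖x - y‖) ^ ((n:ℝ) + (t*q - (n:ℝ)))) :=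
          hcA (4 * ‖x - y‖) (by positivity)
  -- combine
  set X : ℝ≥0∞ := ENNReal.ofReal ((4 * ‖x - y‖) ^ ((n:ℝ) + (t*q - (n:ℝ)))) with hXdef
  have hcomb : ENNReal.ofReal ‖g₂‖
      ≤ ENNReal.ofReal C₀ * (Jt^(1/p) * (cA * X)^(1/q)) := by
    refine le_trans hI (mul_le_mul_right ?_ _)
    refine le_trans hHolder ?_
    rw [hφp]
    exact mul_le_mul_right (ENNReal.rpow_le_rpow hψq (by positivity)) _
  have hgp : (ENNReal.ofReal ‖g₂‖)^p
      ≤ (ENNReal.ofReal C₀ * (Jt^(1/p) * (cA * X)^(1/q)))^p :=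
    ENNReal.rpow_le_rpow hcomb hp0.le
  have hX : X = ((ENNReal.ofReal 4 * (‖x - y‖₊ : ℝ≥0∞)))^(t*q) := by
    rw [hXdef, show (n:ℝ) + (t*q - (n:ℝ)) = t*q from by ring,
      ← ENNReal.ofReal_rpow_of_pos (by positivity),
      ENNReal.ofReal_mul (by norm_num : (0:ℝ) ≤ 4), ofReal_norm_eq_coe_nnnorm]
  have halg : (ENNReal.ofReal C₀ * (Jt^(1/p) * (cA * X)^(1/q)))^p *
        ((‖x - y‖₊ : ℝ≥0∞) ^ ((n:ℝ) + s*p))⁻¹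
      = ((ENNReal.ofReal C₀)^p * cA^(p/q) * (ENNReal.ofReal (4:ℝ))^(t*p)) *
          ((‖x - y‖₊ : ℝ≥0∞) ^ ((t-s)*p - (n:ℝ))) * Jt := by
    rw [hX]
    rw [ENNReal.mul_rpow_of_nonneg _ _ hp0.le, ENNReal.mul_rpow_of_nonneg _ _ hp0.le,
      ← ENNReal.rpow_mul Jt, one_div_mul_cancel hp0.ne', ENNReal.rpow_one,
      ← ENNReal.rpow_mul (cA * _),
      ENNReal.mul_rpow_of_nonneg _ _ (by positivity : (0:ℝ) ≤ (1/q)*p),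
      ← ENNReal.rpow_mul (ENNReal.ofReal 4 * _),
      show t*q*(1/q*p) = t*p from by field_simp,
      ENNReal.mul_rpow_of_nonneg _ _ (by positivity : (0:ℝ) ≤ t*p),
      show (1/q)*p = p/q from by ring,
      ← ENNReal.rpow_neg]
    rw [show ENNReal.ofReal C₀ ^ p * (Jt * (cA ^ (p/q) *
          (ENNReal.ofReal 4 ^ (t*p) * (‖x - y‖₊ : ℝ≥0∞) ^ (t*p)))) *
            (‖x - y‖₊ : ℝ≥0∞) ^ (-((n:ℝ) + s*p))
        = ENNReal.ofReal C₀ ^ p * cA ^ (p/q) * ENNReal.ofReal 4 ^ (t*p) *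
            ((‖x - y‖₊ : ℝ≥0∞) ^ (t*p) * (‖x - y‖₊ : ℝ≥0∞) ^ (-((n:ℝ) + s*p))) * Jt
        from by ring,
      ← ENNReal.rpow_add _ _ hRne ENNReal.coe_ne_top,
      show t*p + -((n:ℝ)+s*p) = (t-s)*p - (n:ℝ) from by ring]
  calc ENNReal.ofReal (‖g₂‖ ^ p / ‖x - y‖ ^ ((n : ℝ) + s * p))
      = (ENNReal.ofReal ‖g₂‖)^p * ((‖x - y‖₊ : ℝ≥0∞) ^ ((n:ℝ) + s*p))⁻¹ := e0
    _ ≤ (ENNReal.ofReal C₀ * (Jt^(1/p) * (cA * X)^(1/q)))^p *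
          ((‖x - y‖₊ : ℝ≥0∞) ^ ((n:ℝ) + s*p))⁻¹ := mul_le_mul_left hgp _
    _ = _ := halg

lemma key2 (n : ℕ) (hn : 1 ≤ n) (p s t : ℝ) (hp0 : 0 < p) (ht : 0 < t) (hts : t < s)
    (c₁ cB : ℝ≥0∞) (hc₁ : c₁ ≠ ⊤) (hcB : cB ≠ ⊤)
    (hcBb : ∀ r : ℝ, 0 < r →
      ∫⁻ w in {w : EuclideanSpace ℝ (Fin n) | r ≤ ‖w‖}, (‖w‖₊ : ℝ≥0∞) ^ ((t-s)*p - (n:ℝ))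
        ≤ cB * ENNReal.ofReal (r ^ ((n:ℝ) + ((t-s)*p - (n:ℝ)))))
    (Ω : Set (EuclideanSpace ℝ (Fin n))) (f : EuclideanSpace ℝ (Fin n) → ℂ)
    (hΩ : MeasurableSet Ω) (hfm : Measurable f) (x : EuclideanSpace ℝ (Fin n))
    (orig : EuclideanSpace ℝ (Fin n) → ℝ≥0∞)
    (hb : ∀ y : EuclideanSpace ℝ (Fin n), y ≠ x →
      orig y ≤ c₁ * ((‖x - y‖₊ : ℝ≥0∞) ^ ((t-s)*p - (n:ℝ))) *
        ∫⁻ u in Ω ∩ {u | ‖x - u‖ < 4 * ‖x - y‖},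
          (‖f u - f x‖₊ : ℝ≥0∞)^p * (‖x - u‖₊ : ℝ≥0∞)^(-((n:ℝ) + t*p))) :
    ∫⁻ y in Ω, orig y
      ≤ (c₁ * cB * ENNReal.ofReal (((4:ℝ) ^ ((t-s)*p))⁻¹)) *
          ∫⁻ u in Ω, (‖f u - f x‖₊ : ℝ≥0∞)^p * (‖x - u‖₊ : ℝ≥0∞)^(-((n:ℝ) + s*p)) := by
  haveI : Nonempty (Fin n) := Fin.pos_iff_nonempty.mp hn
  set b : ℝ := (t-s)*p - (n:ℝ) with hbdef
  set F : EuclideanSpace ℝ (Fin n) → ℝ≥0∞ := fun u => (‖f u - f x‖₊ : ℝ≥0∞)^p * (‖x - u‖₊ : ℝ≥0∞)^(-((n:ℝ) + t*p))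
    with hFdef
  set G : EuclideanSpace ℝ (Fin n) → ℝ≥0∞ := fun u => (‖f u - f x‖₊ : ℝ≥0∞)^p * (‖x - u‖₊ : ℝ≥0∞)^(-((n:ℝ) + s*p))
    with hGdef
  set W : Set (EuclideanSpace ℝ (Fin n) × EuclideanSpace ℝ (Fin n)) := {z : EuclideanSpace ℝ (Fin n) × EuclideanSpace ℝ (Fin n) | ‖x - z.2‖ < 4 * ‖x - z.1‖} with hWdef
  have hWm : MeasurableSet W := measurableSet_lt (by fun_prop) (by fun_prop)
  set Ψ : EuclideanSpace ℝ (Fin n) × EuclideanSpace ℝ (Fin n) → ℝ≥0∞ := fun z =>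
    c₁ * (‖x - z.1‖₊ : ℝ≥0∞) ^ b * W.indicator (fun z => F z.2) z with hΨdef
  have hFm : Measurable F := by rw [hFdef]; fun_prop
  have hΨm : Measurable Ψ := by
    rw [hΨdef]
    apply Measurable.mul
    · fun_prop
    · exact Measurable.indicator (by rw [hFdef]; fun_prop) hWm
  have hae : ∀ᵐ (u : EuclideanSpace ℝ (Fin n)) ∂(volume : Measure (EuclideanSpace ℝ (Fin n))), u ≠ x := by
    rw [ae_iff]
    simp only [ne_eq, not_not]
    rw [show {a : EuclideanSpace ℝ (Fin n) | a = x} = {x} from by ext; simp]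
    exact measure_singleton x
  -- Step 1 : pointwise in y
  have step1 : ∀ y : EuclideanSpace ℝ (Fin n), y ≠ x →
      orig y ≤ ∫⁻ u in Ω, Ψ (y, u) := by
    intro y hy
    refine le_trans (hb y hy) (le_of_eq ?_)
    have hTm : MeasurableSet {u : EuclideanSpace ℝ (Fin n) | ‖x - u‖ < 4 * ‖x - y‖} :=
      measurableSet_lt (by fun_prop) (by fun_prop)
    have hre : ∫⁻ u in Ω ∩ {u : EuclideanSpace ℝ (Fin n) | ‖x - u‖ < 4 * ‖x - y‖}, F u
        = ∫⁻ u in Ω, ({u : EuclideanSpace ℝ (Fin n) | ‖x - u‖ < 4 * ‖x - y‖}).indicator F u := by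
      rw [lintegral_indicator hTm, Measure.restrict_restrict hTm, inter_comm]
    rw [hre]
    have hnn : ‖x - y‖₊ ≠ 0 := by
      simpa [nnnorm_eq_zero] using (sub_ne_zero.mpr (fun h => hy h.symm))
    have hfin : c₁ * (‖x - y‖₊ : ℝ≥0∞) ^ b ≠ ⊤ := by
      apply ENNReal.mul_ne_top hc₁
      rw [← ENNReal.coe_rpow_of_ne_zero hnn]
      exact ENNReal.coe_ne_top
    rw [← lintegral_const_mul' _ _ hfin]
    apply lintegral_congr
    intro u
    rw [hΨdef]
    simp only []
    congr 1
  -- Step 2: integrate in y and swap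
  have step2 : ∫⁻ y in Ω, orig y ≤ ∫⁻ u in Ω, ∫⁻ y in Ω, Ψ (y, u) := by
    refine le_trans (lintegral_mono_ae ?_) (le_of_eq (lintegral_lintegral_swap ?_))
    · exact ae_restrict_of_ae (hae.mono (fun y hy => step1 y hy))
    · exact hΨm.aemeasurable
  -- Step 3: inner y integral for fixed u ≠ x
  have step3 : ∀ u : EuclideanSpace ℝ (Fin n), u ≠ x →
      ∫⁻ y in Ω, Ψ (y, u)
        ≤ (c₁ * cB * ENNReal.ofReal (((4:ℝ)^((t-s)*p))⁻¹)) * G u := by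
    intro u hu
    have hxu : x - u ≠ 0 := sub_ne_zero.mpr (fun h => hu h.symm)
    have hxu0 : 0 < ‖x - u‖ := norm_pos_iff.mpr hxu
    have hnnu : ‖x - u‖₊ ≠ 0 := by simpa [nnnorm_eq_zero] using hxu
    have hner : (‖x - u‖₊ : ℝ≥0∞) ≠ 0 := by
      simpa [ENNReal.coe_ne_zero] using hnnu
    set r : ℝ := ‖x - u‖ / 4 with hrdef
    have hr : 0 < r := by positivity
    have hFfin : F u ≠ ⊤ := by
      apply ENNReal.mul_ne_top
      · exact ENNReal.rpow_ne_top_of_nonneg hp0.le ENNReal.coe_ne_top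
      · rw [← ENNReal.coe_rpow_of_ne_zero hnnu]
        exact ENNReal.coe_ne_top
    have hcfin : c₁ * F u ≠ ⊤ := ENNReal.mul_ne_top hc₁ hFfin
    set S' : Set (EuclideanSpace ℝ (Fin n)) := {y : EuclideanSpace ℝ (Fin n) | r ≤ ‖x - y‖}
      with hS'def
    have hS'm : MeasurableSet S' := measurableSet_le (by fun_prop) (by fun_prop)
    have hptw : ∀ y : EuclideanSpace ℝ (Fin n),
        Ψ (y, u) ≤ (c₁ * F u) * S'.indicator (fun y => (‖x - y‖₊ : ℝ≥0∞) ^ b) y := by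
      intro y
      rw [hΨdef]
      simp only []
      by_cases h : (y, u) ∈ W
      · rw [Set.indicator_of_mem h]
        have hyS : y ∈ S' := by
          have h4 : ‖x - u‖ < 4 * ‖x - y‖ := h
          have : r ≤ ‖x - y‖ := by rw [hrdef]; linarith
          exact this
        rw [Set.indicator_of_mem hyS]
        exact le_of_eq (by ring)
      · rw [Set.indicator_of_notMem h, mul_zero]
        exact zero_le
    calc ∫⁻ y in Ω, Ψ (y, u)
        ≤ ∫⁻ y in Ω, (c₁ * F u) * S'.indicator (fun y => (‖x - y‖₊ : ℝ≥0∞) ^ b) y :=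
          lintegral_mono hptw
      _ = (c₁ * F u) * ∫⁻ y in Ω, S'.indicator (fun y => (‖x - y‖₊ : ℝ≥0∞) ^ b) y :=
          lintegral_const_mul' _ _ hcfin
      _ ≤ (c₁ * F u) * ∫⁻ y, S'.indicator (fun y => (‖x - y‖₊ : ℝ≥0∞) ^ b) y ∂volume :=
          mul_le_mul_right (setLIntegral_le_lintegral _ _) _
      _ = (c₁ * F u) * ∫⁻ y in S', (‖x - y‖₊ : ℝ≥0∞) ^ b := by
          rw [lintegral_indicator hS'm]
      _ = (c₁ * F u) * ∫⁻ w in {w : EuclideanSpace ℝ (Fin n) | r ≤ ‖w‖}, (‖w‖₊ : ℝ≥0∞) ^ b := by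
          congr 1
          have hSeq : S' = (fun y => x - y) ⁻¹' {w : EuclideanSpace ℝ (Fin n) | r ≤ ‖w‖} := by
            ext y
            simp [hS'def]
          rw [hSeq]
          exact (Measure.measurePreserving_sub_left volume x).setLIntegral_comp_preimage_emb
            (MeasurableEquiv.subLeft x).measurableEmbedding (fun w => (‖w‖₊ : ℝ≥0∞) ^ b)
            {w : EuclideanSpace ℝ (Fin n) | r ≤ ‖w‖}
      _ ≤ (c₁ * F u) * (cB * ENNReal.ofReal (r ^ ((n:ℝ) + b))) :=
          mul_le_mul_right (hcBb r hr) _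
      _ = (c₁ * cB * ENNReal.ofReal (((4:ℝ)^((t-s)*p))⁻¹)) * G u := by
          rw [show (n:ℝ) + b = (t-s)*p from by rw [hbdef]; ring, hrdef,
            Real.div_rpow (norm_nonneg _) (by norm_num : (0:ℝ) ≤ 4),
            div_eq_mul_inv,
            ENNReal.ofReal_mul (by positivity),
            ← ENNReal.ofReal_rpow_of_pos hxu0, ofReal_norm_eq_coe_nnnorm]
          rw [hFdef, hGdef]
          simp only []
          rw [show c₁ * ((‖f u - f x‖₊ : ℝ≥0∞)^p * (‖x - u‖₊ : ℝ≥0∞)^(-((n:ℝ)+t*p))) *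
                (cB * ((‖x - u‖₊ : ℝ≥0∞)^((t-s)*p) * ENNReal.ofReal (((4:ℝ)^((t-s)*p))⁻¹)))
              = c₁ * cB * ENNReal.ofReal (((4:ℝ)^((t-s)*p))⁻¹) *
                  ((‖f u - f x‖₊ : ℝ≥0∞)^p *
                    ((‖x - u‖₊ : ℝ≥0∞)^(-((n:ℝ)+t*p)) * (‖x - u‖₊ : ℝ≥0∞)^((t-s)*p)))
              from by ring,
            ← ENNReal.rpow_add _ _ hner ENNReal.coe_ne_top,
            show -((n:ℝ)+t*p) + (t-s)*p = -((n:ℝ)+s*p) from by ring]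
  -- Step 4: conclude
  refine le_trans step2 ?_
  calc ∫⁻ u in Ω, ∫⁻ y in Ω, Ψ (y, u)
      ≤ ∫⁻ u in Ω, (c₁ * cB * ENNReal.ofReal (((4:ℝ)^((t-s)*p))⁻¹)) * G u :=
        lintegral_mono_ae (ae_restrict_of_ae (hae.mono fun u hu => step3 u hu))
    _ = _ :=
        lintegral_const_mul' _ _
          (ENNReal.mul_ne_top (ENNReal.mul_ne_top hc₁ hcB) ENNReal.ofReal_ne_top)

/-- Besov-type estimate for the term `g₂`:
if `|K(x-u)| ≤ C₀/|x-u|ⁿ`, then for `g₂(x,y) = ∫_{Ω ∩ {|x-u|<4|x-y|}} K(x-u)(f(u)-f(x)) du`,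
`∫_Ω∫_Ω |g₂(x,y)|^p/|x-y|^{n+sp} ≤ C ∫_Ω∫_Ω |f(u)-f(x)|^p/|x-u|^{n+sp}`,
with `C = C(n,p,s,t,C₀)` only. -/
theorem stmt8 (n : ℕ) (hn : 1 ≤ n) (p q s t C₀ : ℝ)
    (hp : 1 < p) (ht : 0 < t) (hts : t < s) (hs : s < 1)
    (hpq : 1 / p + 1 / q = 1) (hC₀ : 0 < C₀) :
    ∃ C > 0, ∀ (Ω : Set (EuclideanSpace ℝ (Fin n)))
      (K : EuclideanSpace ℝ (Fin n) → ℝ) (f : EuclideanSpace ℝ (Fin n) → ℂ),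
      MeasurableSet Ω → Measurable K → Measurable f →
      (∀ x : EuclideanSpace ℝ (Fin n), x ≠ 0 → |K x| ≤ C₀ / ‖x‖ ^ (n : ℝ)) →
      (∫⁻ x in Ω, ∫⁻ y in Ω,
          ENNReal.ofReal (‖f x - f y‖ ^ p / ‖x - y‖ ^ ((n : ℝ) + s * p)) < ⊤) →
      (∫⁻ x in Ω, ∫⁻ y in Ω,
          ENNReal.ofReal
            (‖∫ u in Ω ∩ {u | ‖x - u‖ < 4 * ‖x - y‖},
                ((K (x - u) : ℝ) : ℂ) * (f u - f x)‖ ^ p /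
              ‖x - y‖ ^ ((n : ℝ) + s * p))) ≤
        ENNReal.ofReal C *
          ∫⁻ x in Ω, ∫⁻ u in Ω,
            ENNReal.ofReal (‖f u - f x‖ ^ p / ‖x - u‖ ^ ((n : ℝ) + s * p)) := by
  haveI : Nonempty (Fin n) := Fin.pos_iff_nonempty.mp hn
  have hp0 : 0 < p := lt_trans one_pos hp
  have h1p : 1/p < 1 := by rw [div_lt_one hp0]; exact hp
  have h1p0 : 0 < 1/p := by positivity
  have hinvq : 0 < 1/q := by linarith
  have hq0 : 0 < q := one_div_pos.mp hinvq
  have hq1 : 1 < q := by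
    have hlt : 1/q < 1 := by linarith
    rw [div_lt_one hq0] at hlt
    exact hlt
  obtain ⟨cA, hcAtop, hcA⟩ := lintegral_ball_rpow n hn (t*q - (n:ℝ))
    (by nlinarith [mul_pos ht hq0])
  obtain ⟨cB, hcBtop, hcB⟩ := lintegral_compl_rpow n hn ((t-s)*p - (n:ℝ))
    (by nlinarith [mul_pos (show (0:ℝ) < s - t by linarith) hp0])
  set c₁ : ℝ≥0∞ := (ENNReal.ofReal C₀)^p * cA^(p/q) * (ENNReal.ofReal (4:ℝ))^(t*p) with hc₁def
  have hc₁top : c₁ ≠ ⊤ := by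
    apply ENNReal.mul_ne_top
    apply ENNReal.mul_ne_top
    · exact ENNReal.rpow_ne_top_of_nonneg hp0.le ENNReal.ofReal_ne_top
    · exact ENNReal.rpow_ne_top_of_nonneg (by positivity) hcAtop
    · exact ENNReal.rpow_ne_top_of_nonneg (by positivity) ENNReal.ofReal_ne_top
  set ctot : ℝ≥0∞ := c₁ * cB * ENNReal.ofReal (((4:ℝ) ^ ((t-s)*p))⁻¹) with hctotdef
  have hctot : ctot ≠ ⊤ :=
    ENNReal.mul_ne_top (ENNReal.mul_ne_top hc₁top hcBtop) ENNReal.ofReal_ne_top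
  refine ⟨ctot.toReal + 1, by positivity, ?_⟩
  intro Ω K f hΩ hKm hfm hKb _hfin
  have hctotC : ctot ≤ ENNReal.ofReal (ctot.toReal + 1) := by
    calc ctot = ENNReal.ofReal ctot.toReal := (ENNReal.ofReal_toReal hctot).symm
      _ ≤ _ := ENNReal.ofReal_le_ofReal (by linarith)
  -- per-x bound via key2
  have key : ∀ x : EuclideanSpace ℝ (Fin n),
      ∫⁻ y in Ω, ENNReal.ofReal
          (‖∫ u in Ω ∩ {u | ‖x - u‖ < 4 * ‖x - y‖},
              ((K (x - u) : ℝ) : ℂ) * (f u - f x)‖ ^ p /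
            ‖x - y‖ ^ ((n : ℝ) + s * p))
        ≤ ctot * ∫⁻ u in Ω, (‖f u - f x‖₊ : ℝ≥0∞)^p * (‖x - u‖₊ : ℝ≥0∞)^(-((n:ℝ) + s*p)) := by
    intro x
    refine key2 n hn p s t hp0 ht hts c₁ cB hc₁top hcBtop hcB Ω f hΩ hfm x _ ?_
    intro y hy
    exact key1 n hn p q s t C₀ hp ht hts hq1 hpq hC₀ cA hcA Ω K f hΩ hKm hfm hKb x y hy
  -- identify RHS integrand
  have hae : ∀ x : EuclideanSpace ℝ (Fin n),
      ∀ᵐ (u : EuclideanSpace ℝ (Fin n)) ∂(volume : Measure (EuclideanSpace ℝ (Fin n))), u ≠ x := by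
    intro x
    rw [ae_iff]
    simp only [ne_eq, not_not]
    rw [show {a : EuclideanSpace ℝ (Fin n) | a = x} = {x} from by ext; simp]
    exact measure_singleton x
  have hG : ∀ x : EuclideanSpace ℝ (Fin n),
      ∫⁻ u in Ω, (‖f u - f x‖₊ : ℝ≥0∞)^p * (‖x - u‖₊ : ℝ≥0∞)^(-((n:ℝ) + s*p))
        = ∫⁻ u in Ω, ENNReal.ofReal (‖f u - f x‖ ^ p / ‖x - u‖ ^ ((n : ℝ) + s * p)) := by
    intro x
    refine lintegral_congr_ae (ae_restrict_of_ae ((hae x).mono fun u hu => ?_))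
    have hxu0 : 0 < ‖x - u‖ := norm_pos_iff.mpr (sub_ne_zero.mpr (fun h => hu h.symm))
    dsimp only
    rw [ENNReal.ofReal_div_of_pos (Real.rpow_pos_of_pos hxu0 _), div_eq_mul_inv,
      ← ENNReal.ofReal_rpow_of_nonneg (norm_nonneg _) hp0.le,
      ← ENNReal.ofReal_rpow_of_pos hxu0, ofReal_norm_eq_coe_nnnorm,
      ofReal_norm_eq_coe_nnnorm, ← ENNReal.rpow_neg]
  calc ∫⁻ x in Ω, ∫⁻ y in Ω,
        ENNReal.ofReal
          (‖∫ u in Ω ∩ {u | ‖x - u‖ < 4 * ‖x - y‖},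
              ((K (x - u) : ℝ) : ℂ) * (f u - f x)‖ ^ p /
            ‖x - y‖ ^ ((n : ℝ) + s * p))
      ≤ ∫⁻ x in Ω, ctot *
          ∫⁻ u in Ω, (‖f u - f x‖₊ : ℝ≥0∞)^p * (‖x - u‖₊ : ℝ≥0∞)^(-((n:ℝ) + s*p)) :=
        lintegral_mono fun x => key x
    _ = ctot * ∫⁻ x in Ω,
          ∫⁻ u in Ω, (‖f u - f x‖₊ : ℝ≥0∞)^p * (‖x - u‖₊ : ℝ≥0∞)^(-((n:ℝ) + s*p)) :=
        lintegral_const_mul' _ _ hctot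
    _ = ctot * ∫⁻ x in Ω,
          ∫⁻ u in Ω, ENNReal.ofReal (‖f u - f x‖ ^ p / ‖x - u‖ ^ ((n : ℝ) + s * p)) := by
        rw [lintegral_congr fun x => hG x]
    _ ≤ ENNReal.ofReal (ctot.toReal + 1) * ∫⁻ x in Ω,
          ∫⁻ u in Ω, ENNReal.ofReal (‖f u - f x‖ ^ p / ‖x - u‖ ^ ((n : ℝ) + s * p)) :=
        mul_le_mul_left hctotC _
end

section
/- Let Ω ⊂ ℂ be bounded with diameter d, and let k : Ω × Ω → ℂ satisfy |k(z,w)| ≤ C/|z-w| and |k(z', w) - k(z, w)| ≤ C|z - z'|/|z - w|² whenever |z - w| > 2|z - z'|. Define T f(z) = ∫_Ω k(z,w) f(w) dw for bounded f. Then for all z₁, z₂ ∈ Ω, |Tf(z₁) - Tf(z₂)| ≤ C' |z₁ - z₂| (1 + log(d/|z₁ - z₂|)) ‖f‖_∞, where C' depends only on C. -/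
open MeasureTheory Metric Set
open scoped ENNReal NNReal

lemma polarC (f : ℝ → ℝ≥0∞) (hf : Measurable f) :
    ∫⁻ x : ℂ, f ‖x‖ = ENNReal.ofReal (2 * Real.pi) * ∫⁻ y in Ioi (0:ℝ), ENNReal.ofReal y * f y := by
  have h2 : Module.finrank ℝ ℂ = 2 := Complex.finrank_real_complex
  have key := (Measure.measurePreserving_homeomorphUnitSphereProd (volume : Measure ℂ)).lintegral_comp_emb
    (Homeomorph.measurableEmbedding _) ((f ∘ Subtype.val ∘ Prod.snd))
  have hfm : Measurable fun y : Ioi (0:ℝ) => f y := hf.comp measurable_subtype_coe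
  calc ∫⁻ x : ℂ, f ‖x‖
      = ∫⁻ x in ({0}ᶜ : Set ℂ), f ‖x‖ := by rw [restrict_compl_singleton]
    _ = ∫⁻ x : ({0}ᶜ : Set ℂ), f ‖x.1‖ ∂((volume : Measure ℂ).comap Subtype.val) :=
        (lintegral_subtype_comap (measurableSet_singleton 0).compl _).symm
    _ = ∫⁻ p : sphere (0:ℂ) 1 × Ioi (0:ℝ), f p.2
          ∂((volume : Measure ℂ).toSphere.prod (.volumeIoiPow (Module.finrank ℝ ℂ - 1))) := by
          simpa [homeomorphUnitSphereProd] using key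
    _ = ∫⁻ _ : sphere (0:ℂ) 1, (∫⁻ y : Ioi (0:ℝ), f y ∂(.volumeIoiPow (Module.finrank ℝ ℂ - 1)))
          ∂(volume : Measure ℂ).toSphere :=
        lintegral_prod _ (hfm.comp measurable_snd).aemeasurable
    _ = ((volume : Measure ℂ).toSphere univ) *
          ∫⁻ y : Ioi (0:ℝ), f y ∂(.volumeIoiPow (Module.finrank ℝ ℂ - 1)) := by
        rw [lintegral_const]; ring
    _ = ENNReal.ofReal (2 * Real.pi) * ∫⁻ y in Ioi (0:ℝ), ENNReal.ofReal y * f y := by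
        rw [Measure.toSphere_apply_univ, h2]
        congr 1
        · rw [Complex.volume_ball]
          simp [ENNReal.ofReal_mul, ENNReal.ofReal_coe_nnreal, ← NNReal.coe_real_pi]
        · rw [Measure.volumeIoiPow,
            lintegral_withDensity_eq_lintegral_mul _ (by fun_prop) hfm]
          simp only [Pi.mul_apply]
          rw [lintegral_subtype_comap measurableSet_Ioi
            (fun a => ENNReal.ofReal (a ^ (2 - 1)) * f a)]
          simp [pow_one]

lemma lintegral_shiftC (f : ℂ → ℝ≥0∞) (z : ℂ) : ∫⁻ w : ℂ, f (w - z) = ∫⁻ w : ℂ, f w := by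
  simpa [sub_eq_add_neg] using lintegral_add_right_eq_self f (-z)

lemma ballBound (z : ℂ) (R : ℝ) :
    ∫⁻ w in closedBall z R, ENNReal.ofReal ‖z - w‖⁻¹ = ENNReal.ofReal (2 * Real.pi * R) := by
  set F : ℝ → ℝ≥0∞ := fun r => if r ≤ R then ENNReal.ofReal r⁻¹ else 0 with hF
  have hFm : Measurable F := Measurable.ite (measurableSet_Iic) (by fun_prop) measurable_const
  have h1 : ∫⁻ w in closedBall z R, ENNReal.ofReal ‖z - w‖⁻¹ = ∫⁻ w : ℂ, F ‖w - z‖ := by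
    rw [← lintegral_indicator (measurableSet_closedBall)]
    congr 1; ext w
    classical
    rw [indicator_apply]
    by_cases h : w ∈ closedBall z R
    · simp only [hF]
      rw [if_pos h, if_pos (by rwa [mem_closedBall, dist_eq_norm] at h), norm_sub_rev]
    · simp only [hF]
      rw [if_neg h, if_neg (by rwa [mem_closedBall, dist_eq_norm] at h)]
  rw [h1, lintegral_shiftC (fun w => F ‖w‖) z, polarC F hFm]
  have h2 : ∀ y : ℝ, ENNReal.ofReal y * F y = (Iic R).indicator (fun y => ENNReal.ofReal y * ENNReal.ofReal y⁻¹) y := by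
    intro y; by_cases h : y ≤ R <;> simp [hF, indicator_apply, h]
  simp only [h2]
  rw [lintegral_indicator measurableSet_Iic, Measure.restrict_restrict measurableSet_Iic,
    inter_comm, Ioi_inter_Iic]
  rw [setLIntegral_congr_fun measurableSet_Ioc
    ((fun y hy => by
      rw [← ENNReal.ofReal_mul hy.1.le, mul_inv_cancel₀ (ne_of_gt hy.1), ENNReal.ofReal_one]))]
  rw [setLIntegral_one, Real.volume_Ioc, sub_zero, ← ENNReal.ofReal_mul Real.two_pi_pos.le]

lemma annulusBound (z : ℂ) (a R : ℝ) (ha : 0 < a) (haR : a ≤ R) :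
    ∫⁻ w in closedBall z R \ ball z a, ENNReal.ofReal (‖z - w‖ ^ 2)⁻¹ =
      ENNReal.ofReal (2 * Real.pi * Real.log (R / a)) := by
  classical
  set F : ℝ → ℝ≥0∞ := fun r => (Icc a R).indicator (fun r => ENNReal.ofReal (r ^ 2)⁻¹) r with hF
  have hFm : Measurable F := Measurable.indicator (by fun_prop) measurableSet_Icc
  have hmem : ∀ w : ℂ, w ∈ closedBall z R \ ball z a ↔ ‖w - z‖ ∈ Icc a R := by
    intro w
    simp only [mem_diff, mem_closedBall, mem_ball, dist_eq_norm, mem_Icc, not_lt]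
    tauto
  have h1 : ∫⁻ w in closedBall z R \ ball z a, ENNReal.ofReal (‖z - w‖ ^ 2)⁻¹
      = ∫⁻ w : ℂ, F ‖w - z‖ := by
    rw [← lintegral_indicator (measurableSet_closedBall.diff measurableSet_ball)]
    congr 1; ext w
    rw [indicator_apply]
    by_cases h : w ∈ closedBall z R \ ball z a
    · simp only [hF]
      rw [if_pos h, indicator_of_mem ((hmem w).1 h), norm_sub_rev]
    · simp only [hF]
      rw [if_neg h, indicator_of_notMem (fun hc => h ((hmem w).2 hc))]
  rw [h1, lintegral_shiftC (fun w => F ‖w‖) z, polarC F hFm]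
  have h2 : ∀ y : ℝ, ENNReal.ofReal y * F y
      = (Icc a R).indicator (fun y => ENNReal.ofReal y * ENNReal.ofReal (y ^ 2)⁻¹) y := by
    intro y
    simp only [hF]
    by_cases h : y ∈ Icc a R
    · rw [indicator_of_mem h, indicator_of_mem h]
    · rw [indicator_of_notMem h, indicator_of_notMem h, mul_zero]
  simp only [h2]
  rw [lintegral_indicator measurableSet_Icc, Measure.restrict_restrict measurableSet_Icc,
    inter_eq_left.2 (fun y hy => mem_Ioi.2 (lt_of_lt_of_le ha hy.1))]
  rw [setLIntegral_congr_fun measurableSet_Icc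
    ((fun y hy => by
      have hy0 : 0 < y := lt_of_lt_of_le ha hy.1
      rw [← ENNReal.ofReal_mul hy0.le, sq, mul_inv, ← mul_assoc,
        mul_inv_cancel₀ (ne_of_gt hy0), one_mul]))]
  have hint : IntegrableOn (fun y : ℝ => y⁻¹) (Icc a R) := by
    apply ContinuousOn.integrableOn_compact isCompact_Icc
    exact continuousOn_id.inv₀ (fun y hy => ne_of_gt (lt_of_lt_of_le ha hy.1))
  rw [← ofReal_integral_eq_lintegral_ofReal hint
    ((ae_restrict_iff' measurableSet_Icc).2 (Filter.Eventually.of_forall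
      (fun y hy => inv_nonneg.2 (le_trans ha.le hy.1))))]
  rw [integral_Icc_eq_integral_Ioc, ← intervalIntegral.integral_of_le haR,
    integral_inv (by rw [Set.uIcc_of_le haR]; exact fun h => absurd h.1 (not_le.2 ha))]
  rw [← ENNReal.ofReal_mul Real.two_pi_pos.le]

/-- log-Lipschitz estimate. If `k` satisfies the standard kernel bounds
`|k(z,w)| ≤ C/|z-w|` and `|k(z',w) - k(z,w)| ≤ C|z-z'|/|z-w|²` for `|z-w| > 2|z-z'|`,
then `Tf(z) = ∫_Ω k(z,w) f(w) dw` satisfies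
`|Tf(z₁) - Tf(z₂)| ≤ C' |z₁-z₂| (1 + log(d/|z₁-z₂|)) ‖f‖_∞`, with `C'` depending only
on `C`. -/
theorem stmt10 (C : ℝ) (hC : 0 < C) :
    ∃ C' > 0, ∀ (Ω : Set ℂ) (k : ℂ → ℂ → ℂ) (f : ℂ → ℂ) (Mf : ℝ),
      MeasurableSet Ω → Bornology.IsBounded Ω →
      Measurable (Function.uncurry k) → Measurable f →
      (∀ z w : ℂ, z ≠ w → ‖k z w‖ ≤ C / ‖z - w‖) →
      (∀ z z' w : ℂ, 2 * ‖z - z'‖ < ‖z - w‖ →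
        ‖k z' w - k z w‖ ≤ C * ‖z - z'‖ / ‖z - w‖ ^ 2) →
      (∀ w ∈ Ω, ‖f w‖ ≤ Mf) →
      ∀ z₁ ∈ Ω, ∀ z₂ ∈ Ω, z₁ ≠ z₂ →
        ‖(∫ w in Ω, k z₁ w * f w) - ∫ w in Ω, k z₂ w * f w‖ ≤
          C' * ‖z₁ - z₂‖ * (1 + Real.log (diam Ω / ‖z₁ - z₂‖)) * Mf := by
  refine ⟨10 * Real.pi * C, by positivity, ?_⟩
  intro Ω k f Mf hΩm hΩb hkm hfm hk1 hk2 hfM z₁ hz₁ z₂ hz₂ hne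
  set δ := ‖z₁ - z₂‖ with hδdef
  set d := diam Ω with hddef
  have hδ : 0 < δ := norm_pos_iff.2 (sub_ne_zero.2 hne)
  have hδd : δ ≤ d := by rw [hδdef, ← dist_eq_norm]; exact dist_le_diam_of_mem hΩb hz₁ hz₂
  have hd : 0 < d := lt_of_lt_of_le hδ hδd
  have hMf : 0 ≤ Mf := le_trans (norm_nonneg _) (hfM z₁ hz₁)
  have hL : 0 ≤ Real.log (d / δ) := Real.log_nonneg ((one_le_div hδ).2 hδd)
  have hΩsub : ∀ z ∈ Ω, Ω ⊆ closedBall z d := fun z hz w hw =>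
    mem_closedBall.2 (by rw [dist_comm]; exact dist_le_diam_of_mem hΩb hz hw)
  have hkz : ∀ z : ℂ, Measurable fun w => k z w := fun z =>
    hkm.comp (measurable_prodMk_left)
  have hane : ∀ z : ℂ, ∀ᵐ w : ℂ ∂(volume.restrict Ω), w ≠ z := by
    intro z
    refine ae_restrict_of_ae ?_
    rw [ae_iff]
    simp only [not_not, Set.setOf_eq_eq_singleton]
    exact measure_singleton z
  -- integrability on Ω
  have hInt : ∀ z ∈ Ω, IntegrableOn (fun w => k z w * f w) Ω := by
    intro z hz
    refine ⟨((hkz z).mul hfm).aestronglyMeasurable, ?_⟩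
    rw [hasFiniteIntegral_iff_norm]
    calc ∫⁻ w in Ω, ENNReal.ofReal ‖k z w * f w‖
        ≤ ∫⁻ w in Ω, ENNReal.ofReal (C * Mf * ‖z - w‖⁻¹) := by
          refine lintegral_mono_ae ?_
          filter_upwards [hane z, ae_restrict_mem hΩm] with w hwz hwΩ
          refine ENNReal.ofReal_le_ofReal ?_
          rw [norm_mul]
          calc ‖k z w‖ * ‖f w‖ ≤ (C / ‖z - w‖) * Mf :=
                mul_le_mul (hk1 z w (Ne.symm hwz)) (hfM w hwΩ) (norm_nonneg _) (by positivity)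
            _ = C * Mf * ‖z - w‖⁻¹ := by ring
      _ = ENNReal.ofReal (C * Mf) * ∫⁻ w in Ω, ENNReal.ofReal ‖z - w‖⁻¹ := by
          rw [← lintegral_const_mul' _ _ ENNReal.ofReal_ne_top]
          congr 1; ext w
          rw [← ENNReal.ofReal_mul (by positivity)]
      _ ≤ ENNReal.ofReal (C * Mf) * ∫⁻ w in closedBall z d, ENNReal.ofReal ‖z - w‖⁻¹ :=
          mul_le_mul_right (lintegral_mono_set (hΩsub z hz)) _
      _ = ENNReal.ofReal (C * Mf) * ENNReal.ofReal (2 * Real.pi * d) := by rw [ballBound]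
      _ < ⊤ := ENNReal.mul_lt_top ENNReal.ofReal_lt_top ENNReal.ofReal_lt_top
  -- rewrite difference as one integral
  set g : ℂ → ℂ := fun w => (k z₁ w - k z₂ w) * f w with hg
  have hsub : (∫ w in Ω, k z₁ w * f w) - ∫ w in Ω, k z₂ w * f w = ∫ w in Ω, g w := by
    rw [← integral_sub (hInt z₁ hz₁) (hInt z₂ hz₂)]
    congr 1; ext w; simp [hg]; ring
  have hgint : IntegrableOn g Ω := by
    have h := (hInt z₁ hz₁).sub (hInt z₂ hz₂)
    have heq : (fun w => (k z₁ w - k z₂ w) * f w)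
        = ((fun w => k z₁ w * f w) - fun w => k z₂ w * f w) := by
      funext w; simp [sub_mul]
    rw [hg, heq]; exact h
  -- split
  set N := Ω ∩ closedBall z₁ (2 * δ) with hN
  set Fa := Ω \ closedBall z₁ (2 * δ) with hFa
  have hNm : MeasurableSet N := hΩm.inter measurableSet_closedBall
  have hFam : MeasurableSet Fa := hΩm.diff measurableSet_closedBall
  have hsplit : ∫ w in Ω, g w = (∫ w in N, g w) + ∫ w in Fa, g w := by
    rw [← setIntegral_union (Set.disjoint_left.2 fun w hwN hwF => hwF.2 hwN.2) hFam
      (hgint.mono_set inter_subset_left) (hgint.mono_set diff_subset),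
      inter_union_diff]
  -- near bound
  have hNear : ‖∫ w in N, g w‖ ≤ C * Mf * (2 * Real.pi * (2 * δ)) + C * Mf * (2 * Real.pi * (3 * δ)) := by
    refine le_trans (norm_integral_le_lintegral_norm _) ?_
    refine ENNReal.toReal_le_of_le_ofReal (by positivity) ?_
    calc ∫⁻ w in N, ENNReal.ofReal ‖g w‖
        ≤ ∫⁻ w in N, (ENNReal.ofReal (C * Mf * ‖z₁ - w‖⁻¹) + ENNReal.ofReal (C * Mf * ‖z₂ - w‖⁻¹)) := by
          refine lintegral_mono_ae ?_
          have h1 := hane z₁; have h2 := hane z₂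
          rw [hN] at *
          filter_upwards [ae_restrict_of_ae_restrict_of_subset inter_subset_left (hane z₁),
            ae_restrict_of_ae_restrict_of_subset inter_subset_left (hane z₂),
            ae_restrict_mem hNm] with w hw1 hw2 hwN
          refine le_trans (ENNReal.ofReal_le_ofReal ?_) ENNReal.ofReal_add_le
          rw [norm_mul]
          calc ‖k z₁ w - k z₂ w‖ * ‖f w‖
              ≤ (‖k z₁ w‖ + ‖k z₂ w‖) * Mf :=
                mul_le_mul (norm_sub_le _ _) (hfM w hwN.1) (norm_nonneg _) (by positivity)
            _ ≤ (C / ‖z₁ - w‖ + C / ‖z₂ - w‖) * Mf :=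
                mul_le_mul_of_nonneg_right
                  (add_le_add (hk1 z₁ w (Ne.symm hw1)) (hk1 z₂ w (Ne.symm hw2))) hMf
            _ = C * Mf * ‖z₁ - w‖⁻¹ + C * Mf * ‖z₂ - w‖⁻¹ := by ring
      _ = (∫⁻ w in N, ENNReal.ofReal (C * Mf * ‖z₁ - w‖⁻¹)) +
            ∫⁻ w in N, ENNReal.ofReal (C * Mf * ‖z₂ - w‖⁻¹) :=
          lintegral_add_left (by fun_prop) _
      _ ≤ ENNReal.ofReal (C * Mf * (2 * Real.pi * (2 * δ))) +
            ENNReal.ofReal (C * Mf * (2 * Real.pi * (3 * δ))) := by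
          gcongr ?_ + ?_
          · calc ∫⁻ w in N, ENNReal.ofReal (C * Mf * ‖z₁ - w‖⁻¹)
                = ENNReal.ofReal (C * Mf) * ∫⁻ w in N, ENNReal.ofReal ‖z₁ - w‖⁻¹ := by
                  rw [← lintegral_const_mul' _ _ ENNReal.ofReal_ne_top]
                  congr 1; ext w; rw [← ENNReal.ofReal_mul (by positivity)]
              _ ≤ ENNReal.ofReal (C * Mf) *
                    ∫⁻ w in closedBall z₁ (2 * δ), ENNReal.ofReal ‖z₁ - w‖⁻¹ :=
                  mul_le_mul_right (lintegral_mono_set inter_subset_right) _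
              _ = ENNReal.ofReal (C * Mf) * ENNReal.ofReal (2 * Real.pi * (2 * δ)) := by
                  rw [ballBound]
              _ = ENNReal.ofReal (C * Mf * (2 * Real.pi * (2 * δ))) := by
                  rw [← ENNReal.ofReal_mul (by positivity)]
          · have hsub3 : N ⊆ closedBall z₂ (3 * δ) := by
              intro w hw
              have h1 : dist w z₁ ≤ 2 * δ := mem_closedBall.1 hw.2
              have h2 : dist z₁ z₂ = δ := by rw [dist_eq_norm]
              refine mem_closedBall.2 ?_
              calc dist w z₂ ≤ dist w z₁ + dist z₁ z₂ := dist_triangle _ _ _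
                _ ≤ 2 * δ + δ := by rw [h2]; linarith
                _ = 3 * δ := by ring
            calc ∫⁻ w in N, ENNReal.ofReal (C * Mf * ‖z₂ - w‖⁻¹)
                = ENNReal.ofReal (C * Mf) * ∫⁻ w in N, ENNReal.ofReal ‖z₂ - w‖⁻¹ := by
                  rw [← lintegral_const_mul' _ _ ENNReal.ofReal_ne_top]
                  congr 1; ext w; rw [← ENNReal.ofReal_mul (by positivity)]
              _ ≤ ENNReal.ofReal (C * Mf) *
                    ∫⁻ w in closedBall z₂ (3 * δ), ENNReal.ofReal ‖z₂ - w‖⁻¹ :=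
                  mul_le_mul_right (lintegral_mono_set hsub3) _
              _ = ENNReal.ofReal (C * Mf) * ENNReal.ofReal (2 * Real.pi * (3 * δ)) := by
                  rw [ballBound]
              _ = ENNReal.ofReal (C * Mf * (2 * Real.pi * (3 * δ))) := by
                  rw [← ENNReal.ofReal_mul (by positivity)]
      _ ≤ ENNReal.ofReal (C * Mf * (2 * Real.pi * (2 * δ)) + C * Mf * (2 * Real.pi * (3 * δ))) := by
          rw [ENNReal.ofReal_add (by positivity) (by positivity)]
  -- far bound
  have hFar : ‖∫ w in Fa, g w‖ ≤ C * δ * Mf * (2 * Real.pi * Real.log (d / δ)) := by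
    refine le_trans (norm_integral_le_lintegral_norm _) ?_
    refine ENNReal.toReal_le_of_le_ofReal (by positivity) ?_
    calc ∫⁻ w in Fa, ENNReal.ofReal ‖g w‖
        ≤ ∫⁻ w in Fa, ENNReal.ofReal (C * δ * Mf * (‖z₁ - w‖ ^ 2)⁻¹) := by
          refine lintegral_mono_ae ?_
          rw [ae_restrict_iff' hFam]
          refine Filter.Eventually.of_forall (fun w hw => ?_)
          refine ENNReal.ofReal_le_ofReal ?_
          have hfar : 2 * ‖z₁ - z₂‖ < ‖z₁ - w‖ := by
            have := hw.2
            rw [mem_closedBall, dist_comm, dist_eq_norm] at this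
            push_neg at this
            exact this
          rw [norm_mul]
          calc ‖k z₁ w - k z₂ w‖ * ‖f w‖
              ≤ (C * ‖z₁ - z₂‖ / ‖z₁ - w‖ ^ 2) * Mf := by
                refine mul_le_mul ?_ (hfM w hw.1) (norm_nonneg _) (by positivity)
                rw [norm_sub_rev]
                exact hk2 z₁ z₂ w hfar
            _ = C * δ * Mf * (‖z₁ - w‖ ^ 2)⁻¹ := by rw [← hδdef]; ring
      _ = ENNReal.ofReal (C * δ * Mf) * ∫⁻ w in Fa, ENNReal.ofReal ((‖z₁ - w‖ ^ 2)⁻¹) := by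
          rw [← lintegral_const_mul' _ _ ENNReal.ofReal_ne_top]
          congr 1; ext w; rw [← ENNReal.ofReal_mul (by positivity)]
      _ ≤ ENNReal.ofReal (C * δ * Mf * (2 * Real.pi * Real.log (d / δ))) := by
          rcases le_or_gt d (2 * δ) with hcase | hcase
          · have hFaempty : Fa = ∅ := by
              rw [hFa, diff_eq_empty]
              exact subset_trans (hΩsub z₁ hz₁) (closedBall_subset_closedBall hcase)
            rw [hFaempty]
            simp
          · have hsubann : Fa ⊆ closedBall z₁ d \ ball z₁ (2 * δ) := fun w hw =>
              ⟨hΩsub z₁ hz₁ hw.1, fun hb => hw.2 (ball_subset_closedBall hb)⟩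
            calc ENNReal.ofReal (C * δ * Mf) * ∫⁻ w in Fa, ENNReal.ofReal ((‖z₁ - w‖ ^ 2)⁻¹)
                ≤ ENNReal.ofReal (C * δ * Mf) *
                    ∫⁻ w in closedBall z₁ d \ ball z₁ (2 * δ), ENNReal.ofReal ((‖z₁ - w‖ ^ 2)⁻¹) :=
                  mul_le_mul_right (lintegral_mono_set hsubann) _
              _ = ENNReal.ofReal (C * δ * Mf) *
                    ENNReal.ofReal (2 * Real.pi * Real.log (d / (2 * δ))) := by
                  rw [annulusBound z₁ (2 * δ) d (by positivity) hcase.le]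
              _ ≤ ENNReal.ofReal (C * δ * Mf) *
                    ENNReal.ofReal (2 * Real.pi * Real.log (d / δ)) := by
                  refine mul_le_mul_right (ENNReal.ofReal_le_ofReal ?_) _
                  have hlog : Real.log (d / (2 * δ)) ≤ Real.log (d / δ) := by
                    refine Real.log_le_log (by positivity) ?_
                    exact div_le_div_of_nonneg_left hd.le hδ (by linarith)
                  exact mul_le_mul_of_nonneg_left hlog Real.two_pi_pos.le
              _ = ENNReal.ofReal (C * δ * Mf * (2 * Real.pi * Real.log (d / δ))) := by
                  rw [← ENNReal.ofReal_mul (by positivity)]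
  -- combine
  rw [hsub, hsplit]
  calc ‖(∫ w in N, g w) + ∫ w in Fa, g w‖
      ≤ ‖∫ w in N, g w‖ + ‖∫ w in Fa, g w‖ := norm_add_le _ _
    _ ≤ (C * Mf * (2 * Real.pi * (2 * δ)) + C * Mf * (2 * Real.pi * (3 * δ))) +
          C * δ * Mf * (2 * Real.pi * Real.log (d / δ)) := add_le_add hNear hFar
    _ ≤ 10 * Real.pi * C * δ * (1 + Real.log (d / δ)) * Mf := by
        have hkey : 0 ≤ Real.pi * (C * (δ * (Mf * Real.log (d / δ)))) := by positivity
        nlinarith [hkey]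
end
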